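/- Truncated-log inequality: define L(x) = log x for e^{-2} ≤ x ≤ e², L(x) = 2 for x ≥ e², L(x) = -2 for x ≤ e^{-2}. Then for all a > 0, b > 0, (a-b)·L(a/b) ≥ (a-b)²/(a+b). -/

import Mathlib

/-- The natural logarithm truncated at ±2. -/
noncomputable def truncLog (x : ℝ) : ℝ :=
  if x ≥ Real.exp 2 then 2
  else if x ≤ Real.exp (-2) then -2
  else Real.log x

lemma truncLog_key (t : ℝ) (ht : 0 < t) :
    (t - 1) * truncLog t ≥ (t - 1)^2 / (t + 1) := by
  have ht1 : 0 < t + 1 := by linarith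
  have hlog_le : Real.log t ≤ t - 1 := Real.log_le_sub_one_of_pos ht
  have hlog_ge : t - 1 ≤ t * Real.log t := by
    have h1 : Real.log (1 / t) ≤ 1 / t - 1 :=
      Real.log_le_sub_one_of_pos (by positivity)
    rw [Real.log_div one_ne_zero (ne_of_gt ht), Real.log_one] at h1
    have h2 : (0 - Real.log t) * t ≤ (1 / t - 1) * t := by
      apply mul_le_mul_of_nonneg_right _ ht.le
      linarith
    have h3 : (1 / t) * t = 1 := by field_simp
    nlinarith
  have he2 : (1:ℝ) < Real.exp 2 := by
    rw [← Real.exp_zero]; exact Real.exp_lt_exp.mpr (by norm_num)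
  have hem2 : Real.exp (-2) < 1 := by
    rw [← Real.exp_zero]; exact Real.exp_lt_exp.mpr (by norm_num)
  unfold truncLog
  split_ifs with h1 h2
  · rw [ge_iff_le, div_le_iff₀ ht1]
    nlinarith
  · rw [ge_iff_le, div_le_iff₀ ht1]
    nlinarith
  · rw [ge_iff_le, div_le_iff₀ ht1]
    rcases le_or_gt 1 t with h | h
    · have hl0 : 0 ≤ Real.log t := Real.log_nonneg h
      nlinarith [mul_nonneg hl0 (by linarith : (0:ℝ) ≤ t - 1)]
    · have hl0 : Real.log t ≤ 0 := Real.log_nonpos ht.le h.le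
      nlinarith [mul_nonneg (by linarith : (0:ℝ) ≤ -Real.log t)
        (by linarith : (0:ℝ) ≤ 1 - t)]

theorem truncated_log_inequality (a b : ℝ) (ha : 0 < a) (hb : 0 < b) :
    (a - b) * truncLog (a / b) ≥ (a - b)^2 / (a + b) := by
  have h := truncLog_key (a / b) (div_pos ha hb)
  have e1 : (a - b) * truncLog (a / b) = b * ((a / b - 1) * truncLog (a / b)) := by
    field_simp
  have e2 : (a - b)^2 / (a + b) = b * ((a / b - 1)^2 / (a / b + 1)) := by
    rw [div_add' _ _ _ (ne_of_gt hb), div_sub' (ne_of_gt hb), div_pow,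
      div_div_div_eq, mul_div_assoc',
      div_eq_div_iff (by positivity) (by positivity)]
    ring
  rw [e1, e2]
  exact mul_le_mul_of_nonneg_left h hb.le
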